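/- arXiv:0909.4969 — 2 statements merged into one kernel-verified Lean document; each statement's English description precedes it below -/
import Mathlib

section
/- Let A and B be real m × n matrices and let k be a positive integer. Let A_k be a best rank-k approximation of A, let B_k be a best rank-k approximation of B, and let (A−B)_k be a best rank-k approximation of A−B. Then ‖A − B_k‖_F ≤ ‖A − A_k‖_F + 2 sqrt(‖(A−B)_k‖_F · ‖A_k‖_F) + ‖(A−B)_k‖_F. -/
open Matrix MeasureTheory ProbabilityTheory
open scoped BigOperators ENNReal

noncomputable section

/-- The Frobenius norm of a real matrix. -/
def frobNorm {m n : Type*} [Fintype m] [Fintype n] (A : Matrix m n ℝ) : ℝ :=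
  Real.sqrt (∑ i, ∑ j, (A i j) ^ 2)

/-- `B` is a best rank-`k` approximation of `A` in Frobenius norm. -/
def IsBestRankApprox {m n : Type*} [Fintype m] [Fintype n]
    (A B : Matrix m n ℝ) (k : ℕ) : Prop :=
  B.rank ≤ k ∧ ∀ C : Matrix m n ℝ, C.rank ≤ k → frobNorm (A - B) ≤ frobNorm (A - C)

/-- A `d`-mode real tensor of size `I 0 × ⋯ × I (d-1)`. -/
abbrev Tensor (d : ℕ) (I : Fin d → ℕ) : Type := (∀ i : Fin d, Fin (I i)) → ℝ

/-- The Frobenius-type norm of a tensor. -/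
def tnorm {d : ℕ} {I : Fin d → ℕ} (X : Tensor d I) : ℝ :=
  Real.sqrt (∑ idx, (X idx) ^ 2)

/-- The mode-`n` product of a tensor with a square `I n × I n` matrix. -/
def modeProd {d : ℕ} {I : Fin d → ℕ} (X : Tensor d I) (n : Fin d)
    (M : Matrix (Fin (I n)) (Fin (I n)) ℝ) : Tensor d I :=
  fun idx => ∑ t : Fin (I n), M (idx n) t * X (Function.update idx n t)

/-- Iterated mode products `X ×_{l₁} M l₁ ×_{l₂} ⋯` along a list of modes. -/
def multiProd {d : ℕ} {I : Fin d → ℕ} (X : Tensor d I)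
    (M : ∀ k : Fin d, Matrix (Fin (I k)) (Fin (I k)) ℝ) (l : List (Fin d)) : Tensor d I :=
  l.foldl (fun Y k => modeProd Y k (M k)) X

/-- The matricization of a tensor along mode `k` : an `I k × ∏_{j ≠ k} I j` matrix. -/
def matricize {d : ℕ} {I : Fin d → ℕ} (X : Tensor d I) (k : Fin d) :
    Matrix (Fin (I k)) (∀ j : {j : Fin d // j ≠ k}, Fin (I j.1)) ℝ :=
  fun a c => X (fun j => if h : j = k then Fin.cast (congrArg I h).symm a else c ⟨j, h⟩)

namespace Stmt1Aux

open Module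

variable {m n : ℕ}

/-- The Frobenius inner product of two real matrices. -/
def ip (M N : Matrix (Fin m) (Fin n) ℝ) : ℝ := ∑ i, ∑ j, M i j * N i j

lemma ip_comm (M N : Matrix (Fin m) (Fin n) ℝ) : ip M N = ip N M := by
  unfold ip; congr 1; funext i; congr 1; funext j; ring

lemma ip_self_nonneg (M : Matrix (Fin m) (Fin n) ℝ) : 0 ≤ ip M M :=
  Finset.sum_nonneg fun i _ => Finset.sum_nonneg fun j _ => mul_self_nonneg _

lemma frobNorm_eq (M : Matrix (Fin m) (Fin n) ℝ) : frobNorm M = Real.sqrt (ip M M) := by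
  unfold frobNorm ip; simp only [pow_two]

lemma frobNorm_nonneg (M : Matrix (Fin m) (Fin n) ℝ) : 0 ≤ frobNorm M := Real.sqrt_nonneg _

lemma sq_frobNorm (M : Matrix (Fin m) (Fin n) ℝ) : frobNorm M ^ 2 = ip M M := by
  rw [frobNorm_eq]; exact Real.sq_sqrt (ip_self_nonneg M)

lemma ip_sub_left (M N P : Matrix (Fin m) (Fin n) ℝ) : ip (M - N) P = ip M P - ip N P := by
  simp [ip, Matrix.sub_apply, sub_mul, Finset.sum_sub_distrib]

lemma ip_sub_right (M N P : Matrix (Fin m) (Fin n) ℝ) : ip M (N - P) = ip M N - ip M P := by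
  rw [ip_comm, ip_sub_left, ip_comm N M, ip_comm P M]

lemma ip_add_left (M N P : Matrix (Fin m) (Fin n) ℝ) : ip (M + N) P = ip M P + ip N P := by
  simp [ip, Matrix.add_apply, add_mul, Finset.sum_add_distrib]

lemma ip_neg_left (M N : Matrix (Fin m) (Fin n) ℝ) : ip (-M) N = - ip M N := by
  simp [ip, Matrix.neg_apply, Finset.sum_neg_distrib]

lemma frobNorm_neg (M : Matrix (Fin m) (Fin n) ℝ) : frobNorm (-M) = frobNorm M := by
  unfold frobNorm; congr 1; simp [Matrix.neg_apply]

lemma ip_sub_sub (M N : Matrix (Fin m) (Fin n) ℝ) :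
    ip (M - N) (M - N) = ip M M - 2 * ip M N + ip N N := by
  rw [ip_sub_left, ip_sub_right, ip_sub_right, ip_comm N M]; ring

lemma ip_add_add (M N : Matrix (Fin m) (Fin n) ℝ) :
    ip (M + N) (M + N) = ip M M + 2 * ip M N + ip N N := by
  rw [ip_add_left, ip_comm M (M + N), ip_add_left, ip_comm N (M + N), ip_add_left,
    ip_comm M N]; ring

lemma eq_zero_of_ip_self_nonpos {M : Matrix (Fin m) (Fin n) ℝ} (h : ip M M ≤ 0) : M = 0 := by
  have h0 : ip M M = 0 := le_antisymm h (ip_self_nonneg M)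
  ext i j
  have h1 := (Finset.sum_eq_zero_iff_of_nonneg
    (fun i _ => Finset.sum_nonneg fun j _ => mul_self_nonneg (M i j))).1 h0 i (Finset.mem_univ i)
  have h2 := (Finset.sum_eq_zero_iff_of_nonneg
    (fun j _ => mul_self_nonneg (M i j))).1 h1 j (Finset.mem_univ j)
  simpa [mul_self_eq_zero] using h2

lemma ip_le (M N : Matrix (Fin m) (Fin n) ℝ) : ip M N ≤ frobNorm M * frobNorm N := by
  have e : ∀ P Q : Matrix (Fin m) (Fin n) ℝ,
      ip P Q = ∑ p : Fin m × Fin n, P p.1 p.2 * Q p.1 p.2 := by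
    intro P Q; rw [ip, Fintype.sum_prod_type]
  have h := Finset.sum_mul_sq_le_sq_mul_sq Finset.univ
    (fun p : Fin m × Fin n => M p.1 p.2) (fun p : Fin m × Fin n => N p.1 p.2)
  have hMN : (ip M N) ^ 2 ≤ ip M M * ip N N := by
    rw [e M N, e M M, e N N]
    simpa [pow_two] using h
  calc ip M N ≤ |ip M N| := le_abs_self _
    _ = Real.sqrt ((ip M N) ^ 2) := (Real.sqrt_sq_eq_abs _).symm
    _ ≤ Real.sqrt (ip M M * ip N N) := Real.sqrt_le_sqrt hMN
    _ = frobNorm M * frobNorm N := by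
        rw [Real.sqrt_mul (ip_self_nonneg M), frobNorm_eq, frobNorm_eq]

lemma frobNorm_add_le (M N : Matrix (Fin m) (Fin n) ℝ) :
    frobNorm (M + N) ≤ frobNorm M + frobNorm N := by
  have h1 : ip (M + N) (M + N) ≤ (frobNorm M + frobNorm N) ^ 2 := by
    rw [ip_add_add]
    have := ip_le M N
    have := sq_frobNorm M; have := sq_frobNorm N
    nlinarith
  rw [frobNorm_eq]
  calc Real.sqrt (ip (M + N) (M + N)) ≤ Real.sqrt ((frobNorm M + frobNorm N) ^ 2) :=
        Real.sqrt_le_sqrt h1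
    _ = frobNorm M + frobNorm N := by
        rw [Real.sqrt_sq (by have := frobNorm_nonneg M; have := frobNorm_nonneg N; linarith)]

/-- column of a matrix as a Euclidean vector -/
def colv (M : Matrix (Fin m) (Fin n) ℝ) (j : Fin n) : EuclideanSpace ℝ (Fin m) := WithLp.toLp 2 (fun i => M i j)

/-- columnwise orthogonal projection of a matrix onto a subspace -/
def pm (U : Submodule ℝ (EuclideanSpace ℝ (Fin m))) (M : Matrix (Fin m) (Fin n) ℝ) :
    Matrix (Fin m) (Fin n) ℝ :=
  fun i j => (Submodule.orthogonalProjection U (colv M j) : EuclideanSpace ℝ (Fin m)) i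

lemma colv_pm (U : Submodule ℝ (EuclideanSpace ℝ (Fin m))) (M : Matrix (Fin m) (Fin n) ℝ)
    (j : Fin n) :
    colv (pm U M) j = (Submodule.orthogonalProjection U (colv M j) : EuclideanSpace ℝ (Fin m)) :=
  rfl

lemma ip_eq_sum_inner (M N : Matrix (Fin m) (Fin n) ℝ) :
    ip M N = ∑ j, (inner ℝ (colv M j) (colv N j) : ℝ) := by
  unfold ip colv
  rw [Finset.sum_comm]
  simp only [PiLp.inner_apply, PiLp.toLp_apply, RCLike.inner_apply, starRingEnd_apply, star_trivial, mul_comm]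

lemma pm_sub (U : Submodule ℝ (EuclideanSpace ℝ (Fin m))) (M N : Matrix (Fin m) (Fin n) ℝ) :
    pm U (M - N) = pm U M - pm U N := by
  ext i j
  have hc : colv (M - N) j = colv M j - colv N j := rfl
  show (Submodule.orthogonalProjection U (colv (M - N) j) : EuclideanSpace ℝ (Fin m)) i = _
  rw [hc, map_sub]
  rfl

lemma pm_sym (U : Submodule ℝ (EuclideanSpace ℝ (Fin m))) (M N : Matrix (Fin m) (Fin n) ℝ) :
    ip (pm U M) N = ip M (pm U N) := by
  rw [ip_eq_sum_inner, ip_eq_sum_inner]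
  refine Finset.sum_congr rfl fun j _ => ?_
  rw [colv_pm, colv_pm]
  exact Submodule.inner_starProjection_left_eq_right U _ _

lemma pm_of_mem (U : Submodule ℝ (EuclideanSpace ℝ (Fin m))) (W : Matrix (Fin m) (Fin n) ℝ)
    (h : ∀ j, colv W j ∈ U) : pm U W = W := by
  ext i j
  show (Submodule.orthogonalProjection U (colv W j) : EuclideanSpace ℝ (Fin m)) i = W i j
  rw [show ((Submodule.orthogonalProjection U (colv W j)) : EuclideanSpace ℝ (Fin m)) = colv W j from
    Submodule.starProjection_eq_self_iff.2 (h j)]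
  rfl

lemma pm_mem (U : Submodule ℝ (EuclideanSpace ℝ (Fin m))) (M : Matrix (Fin m) (Fin n) ℝ)
    (j : Fin n) : colv (pm U M) j ∈ U := by
  rw [colv_pm]; exact Submodule.coe_mem _

lemma pm_idem (U : Submodule ℝ (EuclideanSpace ℝ (Fin m))) (M : Matrix (Fin m) (Fin n) ℝ) :
    pm U (pm U M) = pm U M :=
  pm_of_mem U (pm U M) (pm_mem U M)

lemma ip_zero_right (M : Matrix (Fin m) (Fin n) ℝ) : ip M 0 = 0 := by
  simp [ip]

lemma ip_pm_orth (U : Submodule ℝ (EuclideanSpace ℝ (Fin m))) (M N : Matrix (Fin m) (Fin n) ℝ) :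
    ip (pm U M) (N - pm U N) = 0 := by
  rw [pm_sym, pm_sub, pm_idem, sub_self, ip_zero_right]

lemma pyth (U : Submodule ℝ (EuclideanSpace ℝ (Fin m))) (M : Matrix (Fin m) (Fin n) ℝ) :
    ip M M = ip (pm U M) (pm U M) + ip (M - pm U M) (M - pm U M) := by
  have h1 : M = pm U M + (M - pm U M) := by abel
  have h0 := ip_pm_orth U M M
  calc ip M M = ip (pm U M + (M - pm U M)) (pm U M + (M - pm U M)) := by rw [← h1]
    _ = ip (pm U M) (pm U M) + 2 * ip (pm U M) (M - pm U M)
        + ip (M - pm U M) (M - pm U M) := ip_add_add _ _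
    _ = _ := by rw [h0]; ring

/-- the column span of a matrix, as a subspace of Euclidean space -/
def colSpan (W : Matrix (Fin m) (Fin n) ℝ) : Submodule ℝ (EuclideanSpace ℝ (Fin m)) :=
  (Submodule.span ℝ (Set.range Wᵀ)).map
    ((WithLp.linearEquiv 2 ℝ (Fin m → ℝ)).symm : (Fin m → ℝ) →ₗ[ℝ] EuclideanSpace ℝ (Fin m))

lemma finrank_colSpan (W : Matrix (Fin m) (Fin n) ℝ) : finrank ℝ (colSpan W) = W.rank := by
  rw [colSpan, LinearEquiv.finrank_map_eq, Matrix.rank_eq_finrank_span_cols]; rfl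

lemma colv_mem_colSpan (W : Matrix (Fin m) (Fin n) ℝ) (j : Fin n) : colv W j ∈ colSpan W :=
  ⟨Wᵀ j, Submodule.subset_span ⟨j, rfl⟩, rfl⟩

lemma rank_pm_le (U : Submodule ℝ (EuclideanSpace ℝ (Fin m))) (M : Matrix (Fin m) (Fin n) ℝ) :
    (pm U M).rank ≤ finrank ℝ U := by
  rw [Matrix.rank_eq_finrank_span_cols]
  have hle : Submodule.span ℝ (Set.range (pm U M)ᵀ) ≤
      U.map ((WithLp.linearEquiv 2 ℝ (Fin m → ℝ)) :
        EuclideanSpace ℝ (Fin m) →ₗ[ℝ] (Fin m → ℝ)) := by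
    rw [Submodule.span_le]
    rintro x ⟨j, rfl⟩
    exact ⟨colv (pm U M) j, pm_mem U M j, rfl⟩
  calc finrank ℝ (Submodule.span ℝ (Set.range (pm U M)ᵀ))
      ≤ finrank ℝ (U.map ((WithLp.linearEquiv 2 ℝ (Fin m → ℝ)) :
          EuclideanSpace ℝ (Fin m) →ₗ[ℝ] (Fin m → ℝ))) := Submodule.finrank_mono hle
    _ = finrank ℝ U := LinearEquiv.finrank_map_eq _ _

section Approx

variable {k : ℕ} {X Xk C : Matrix (Fin m) (Fin n) ℝ}

lemma opt_sq (h : IsBestRankApprox X Xk k) (hC : C.rank ≤ k) :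
    ip (X - Xk) (X - Xk) ≤ ip (X - C) (X - C) := by
  have h2 := h.2 C hC
  rw [frobNorm_eq, frobNorm_eq] at h2
  have h3 := pow_le_pow_left₀ (Real.sqrt_nonneg _) h2 2
  rwa [Real.sq_sqrt (ip_self_nonneg _), Real.sq_sqrt (ip_self_nonneg _)] at h3

lemma proj_colSpan_eq (h : IsBestRankApprox X Xk k) : pm (colSpan Xk) X = Xk := by
  set U := colSpan Xk with hU
  have hfix : pm U Xk = Xk := pm_of_mem U Xk (colv_mem_colSpan Xk)
  have hrank : (pm U X).rank ≤ k := (rank_pm_le U X).trans (by rw [hU, finrank_colSpan]; exact h.1)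
  have hopt := opt_sq h hrank
  have hdecomp : pm U (X - Xk) = pm U X - Xk := by rw [pm_sub, hfix]
  have hpyth := pyth U (X - Xk)
  rw [hdecomp] at hpyth
  have he : X - Xk - (pm U X - Xk) = X - pm U X := by abel
  rw [he] at hpyth
  have h0 : ip (pm U X - Xk) (pm U X - Xk) ≤ 0 := by linarith
  exact sub_eq_zero.mp (eq_zero_of_ip_self_nonpos h0)

lemma pyth_opt (h : IsBestRankApprox X Xk k) :
    ip X X = ip Xk Xk + ip (X - Xk) (X - Xk) := by
  have hp := pyth (colSpan Xk) X
  rwa [proj_colSpan_eq h] at hp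

lemma pm_fnsq_le (h : IsBestRankApprox X Xk k) (U : Submodule ℝ (EuclideanSpace ℝ (Fin m)))
    (hU : finrank ℝ U ≤ k) : ip (pm U X) (pm U X) ≤ ip Xk Xk := by
  have h1 := opt_sq h ((rank_pm_le U X).trans hU)
  have h2 := pyth U X
  have h3 := pyth_opt h
  linarith

lemma pm_frob_le (h : IsBestRankApprox X Xk k) (U : Submodule ℝ (EuclideanSpace ℝ (Fin m)))
    (hU : finrank ℝ U ≤ k) : frobNorm (pm U X) ≤ frobNorm Xk := by
  rw [frobNorm_eq, frobNorm_eq]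
  exact Real.sqrt_le_sqrt (pm_fnsq_le h U hU)

lemma ip_rank_le {D Dk : Matrix (Fin m) (Fin n) ℝ} (hDk : IsBestRankApprox D Dk k)
    (hC : C.rank ≤ k) : ip C D ≤ frobNorm C * frobNorm Dk := by
  set U := colSpan C with hU
  have h1 : pm U C = C := pm_of_mem U C (colv_mem_colSpan C)
  have h3 : frobNorm (pm U D) ≤ frobNorm Dk :=
    pm_frob_le hDk U (by rw [hU, finrank_colSpan]; exact hC)
  calc ip C D = ip (pm U C) D := by rw [h1]
    _ = ip C (pm U D) := pm_sym U C D
    _ ≤ frobNorm C * frobNorm (pm U D) := ip_le _ _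
    _ ≤ frobNorm C * frobNorm Dk := mul_le_mul_of_nonneg_left h3 (frobNorm_nonneg C)

end Approx

end Stmt1Aux

set_option maxHeartbeats 2000000 in
/-- For real `m × n` matrices `A`, `B` and a positive integer `k`, if `Ak`, `Bk`
and `Dk` are best rank-`k` Frobenius approximations of `A`, `B` and `A - B` respectively, then
`‖A − Bk‖_F ≤ ‖A − Ak‖_F + 2 √(‖Dk‖_F ‖Ak‖_F) + ‖Dk‖_F`. -/
theorem statement1 {m n : ℕ} (A B : Matrix (Fin m) (Fin n) ℝ) (k : ℕ) (hk : 0 < k)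
    (Ak Bk Dk : Matrix (Fin m) (Fin n) ℝ)
    (hAk : IsBestRankApprox A Ak k) (hBk : IsBestRankApprox B Bk k)
    (hDk : IsBestRankApprox (A - B) Dk k) :
    frobNorm (A - Bk) ≤
      frobNorm (A - Ak) + 2 * Real.sqrt (frobNorm Dk * frobNorm Ak) + frobNorm Dk := by
  set D := A - B with hD
  set U := Stmt1Aux.colSpan Bk with hUdef
  have hfinU : Module.finrank ℝ U ≤ k := by rw [hUdef, Stmt1Aux.finrank_colSpan]; exact hBk.1
  have hPB : Stmt1Aux.pm U B = Bk := Stmt1Aux.proj_colSpan_eq hBk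
  set Pa := Stmt1Aux.pm U A with hPa
  set Pd := Stmt1Aux.pm U D with hPdDef
  have hPd : Pd = Pa - Bk := by rw [hPdDef, hD, Stmt1Aux.pm_sub, hPB]
  set E := frobNorm (A - Ak) with hE
  set a := frobNorm Ak with ha
  set d := frobNorm Dk with hd
  set t := frobNorm Bk with ht
  set u := frobNorm Pd with hu
  set w := frobNorm (A - Pa) with hw
  set pa := frobNorm Pa with hpa
  have hE0 : 0 ≤ E := Stmt1Aux.frobNorm_nonneg _
  have ha0 : 0 ≤ a := Stmt1Aux.frobNorm_nonneg _
  have hd0 : 0 ≤ d := Stmt1Aux.frobNorm_nonneg _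
  have ht0 : 0 ≤ t := Stmt1Aux.frobNorm_nonneg _
  have hu0 : 0 ≤ u := Stmt1Aux.frobNorm_nonneg _
  have hw0 : 0 ≤ w := Stmt1Aux.frobNorm_nonneg _
  have hsplit : A - Bk = (A - Pa) + Pd := by rw [hPd]; abel
  have h1 : frobNorm (A - Bk) ≤ w + u := by
    rw [hsplit]; exact Stmt1Aux.frobNorm_add_le _ _
  have h2 : u ≤ d := Stmt1Aux.pm_frob_le hDk U hfinU
  have h3 : w ^ 2 + pa ^ 2 = a ^ 2 + E ^ 2 := by
    have e1 := Stmt1Aux.pyth U A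
    have e2 := Stmt1Aux.pyth_opt hAk
    have e3 := Stmt1Aux.sq_frobNorm Pa
    have e4 := Stmt1Aux.sq_frobNorm (A - Pa)
    have e5 := Stmt1Aux.sq_frobNorm Ak
    have e6 := Stmt1Aux.sq_frobNorm (A - Ak)
    linarith
  have h4 : t ^ 2 - 2 * t * u ≤ pa ^ 2 := by
    have hPaeq : Pa = Bk + Pd := by rw [hPd]; abel
    have hexp : Stmt1Aux.ip Pa Pa =
        Stmt1Aux.ip Bk Bk + 2 * Stmt1Aux.ip Bk Pd + Stmt1Aux.ip Pd Pd := by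
      rw [hPaeq, Stmt1Aux.ip_add_add]
    have hip : -(t * u) ≤ Stmt1Aux.ip Bk Pd := by
      have hie := Stmt1Aux.ip_le (-Bk) Pd
      rw [Stmt1Aux.ip_neg_left, Stmt1Aux.frobNorm_neg] at hie
      linarith
    have e3 := Stmt1Aux.sq_frobNorm Pa
    have e4 := Stmt1Aux.sq_frobNorm Bk
    have e5 := Stmt1Aux.sq_frobNorm Pd
    nlinarith [sq_nonneg u]
  have hipAD : Stmt1Aux.ip Ak D ≤ a * d := Stmt1Aux.ip_rank_le hDk hAk.1
  have h5 : a ^ 2 - 2 * a * d ≤ t ^ 2 := by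
    have hopt := Stmt1Aux.opt_sq hBk hAk.1
    have hpB := Stmt1Aux.pyth_opt hBk
    have hOrthA : Stmt1Aux.ip A Ak = Stmt1Aux.ip Ak Ak := by
      have hh := Stmt1Aux.pyth_opt hAk
      have hh2 := Stmt1Aux.ip_sub_sub A Ak
      linarith
    have e1 := Stmt1Aux.ip_sub_sub B Ak
    have e2 : Stmt1Aux.ip Ak D = Stmt1Aux.ip Ak A - Stmt1Aux.ip Ak B := by
      rw [hD, Stmt1Aux.ip_sub_right]
    have e3 := Stmt1Aux.ip_comm Ak A
    have e4 := Stmt1Aux.ip_comm B Ak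
    have e5 := Stmt1Aux.sq_frobNorm Ak
    have e6 := Stmt1Aux.sq_frobNorm Bk
    linarith
  set s := Real.sqrt (d * a) with hs
  have hs0 : 0 ≤ s := Real.sqrt_nonneg _
  have hs2 : s ^ 2 = d * a := Real.sq_sqrt (mul_nonneg hd0 ha0)
  have hpa2 : a ^ 2 - 4 * a * d ≤ pa ^ 2 := by
    rcases le_or_gt a (4 * d) with hcase | hcase
    · nlinarith [sq_nonneg pa, mul_nonneg ha0 (by linarith : (0:ℝ) ≤ 4 * d - a)]
    · rcases le_or_gt t a with h6 | h6
      · have htu : t * u ≤ a * d := by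
          calc t * u ≤ a * u := mul_le_mul_of_nonneg_right h6 hu0
            _ ≤ a * d := mul_le_mul_of_nonneg_left h2 ha0
        linarith
      · have h7 : 0 ≤ (t - a) * (t + a - 2 * d) := by
          apply mul_nonneg <;> nlinarith
        have h8 : 0 ≤ t * (d - u) := mul_nonneg ht0 (by linarith)
        nlinarith [mul_nonneg ha0 hd0]
  have hwle : w ≤ E + 2 * s := by
    have hw2 : w ^ 2 ≤ (E + 2 * s) ^ 2 := by nlinarith [mul_nonneg hE0 hs0]
    nlinarith
  linarith


end
end

section
/- Let Y ∈ ℝ^{I₁×⋯×I_d} be a d-mode tensor and for each k = 1,…,d let A^{(k)} be a real I_k × r_k matrix with orthonormal columns, so that P_k = A^{(k)}A^{(k)ᵀ} is an orthogonal projection on ℝ^{I_k}. Then ‖Y − Y ×₁ P₁ ×₂ P₂ ⋯ ×_d P_d‖ ≤ Σ_{k=1}^{d} ‖Y − Y ×_k P_k‖. -/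
open Matrix MeasureTheory ProbabilityTheory
open scoped BigOperators ENNReal

noncomputable section

-- triangle inequality machinery
lemma tnorm_eq_norm {d : ℕ} {I : Fin d → ℕ} (X : Tensor d I) :
    tnorm X = ‖(WithLp.equiv 2 (∀ _ : (∀ i : Fin d, Fin (I i)), ℝ)).symm X‖ := by
  rw [EuclideanSpace.norm_eq]
  simp [tnorm, Real.norm_eq_abs, sq_abs]

lemma tnorm_nonneg {d : ℕ} {I : Fin d → ℕ} (X : Tensor d I) : 0 ≤ tnorm X :=
  Real.sqrt_nonneg _

lemma tnorm_add_le {d : ℕ} {I : Fin d → ℕ} (X Z : Tensor d I) :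
    tnorm (X + Z) ≤ tnorm X + tnorm Z := by
  simp only [tnorm_eq_norm]
  exact norm_add_le _ _


-- linearity
lemma modeProd_sub {d : ℕ} {I : Fin d → ℕ} (X Z : Tensor d I) (n : Fin d)
    (M : Matrix (Fin (I n)) (Fin (I n)) ℝ) :
    modeProd (X - Z) n M = modeProd X n M - modeProd Z n M := by
  funext idx
  simp [modeProd, mul_sub, Finset.sum_sub_distrib]

-- commutativity
lemma modeProd_comm {d : ℕ} {I : Fin d → ℕ} (X : Tensor d I) {m n : Fin d} (h : m ≠ n)
    (M : Matrix (Fin (I m)) (Fin (I m)) ℝ) (N : Matrix (Fin (I n)) (Fin (I n)) ℝ) :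
    modeProd (modeProd X m M) n N = modeProd (modeProd X n N) m M := by
  funext idx
  simp only [modeProd]
  simp only [Finset.mul_sum]
  rw [Finset.sum_comm]
  refine Finset.sum_congr rfl fun s _ => ?_
  refine Finset.sum_congr rfl fun t _ => ?_
  rw [Function.update_of_ne h, Function.update_of_ne (Ne.symm h),
    Function.update_comm (Ne.symm h)]
  ring



lemma mulVec_proj_sq_le {m r : Type*} [Fintype m] [Fintype r] [DecidableEq r]
    (A : Matrix m r ℝ) (hA : Aᵀ * A = 1) (v : m → ℝ) :
    ∑ a, (((A * Aᵀ) *ᵥ v) a) ^ 2 ≤ ∑ a, (v a) ^ 2 := by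
  set P : Matrix m m ℝ := A * Aᵀ with hP
  set u : m → ℝ := P *ᵥ v with hu
  have hPsymm : Pᵀ = P := by
    rw [hP, Matrix.transpose_mul, Matrix.transpose_transpose]
  have hPP : P * P = P := by
    rw [hP, Matrix.mul_assoc, ← Matrix.mul_assoc Aᵀ A Aᵀ, hA, Matrix.one_mul]
  have key : ∑ a, (u a) ^ 2 = ∑ a, v a * u a := by
    have h1 : ∑ a, (u a) ^ 2 = u ⬝ᵥ u := by
      simp [dotProduct, sq]
    have h2 : ∑ a, v a * u a = v ⬝ᵥ u := rfl
    rw [h1, h2]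
    calc u ⬝ᵥ u = u ⬝ᵥ (P *ᵥ v) := rfl
    _ = (u ᵥ* P) ⬝ᵥ v := by rw [Matrix.dotProduct_mulVec]
    _ = (Pᵀ *ᵥ u) ⬝ᵥ v := by rw [← Matrix.vecMul_transpose, Matrix.transpose_transpose]
    _ = ((P * P) *ᵥ v) ⬝ᵥ v := by rw [hPsymm, hu, Matrix.mulVec_mulVec]
    _ = u ⬝ᵥ v := by rw [hPP]
    _ = v ⬝ᵥ u := dotProduct_comm _ _
  have cs := Finset.sum_mul_sq_le_sq_mul_sq Finset.univ v u
  rcases eq_or_lt_of_le (Finset.sum_nonneg (fun a _ => sq_nonneg (u a)) :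
      (0:ℝ) ≤ ∑ a, (u a) ^ 2) with h0 | h0
  · rw [← h0]
    exact Finset.sum_nonneg fun a _ => sq_nonneg (v a)
  · have : (∑ a, (u a) ^ 2) * (∑ a, (u a) ^ 2) ≤ (∑ a, (v a) ^ 2) * (∑ a, (u a) ^ 2) := by
      calc (∑ a, (u a) ^ 2) * (∑ a, (u a) ^ 2) = (∑ a, v a * u a) ^ 2 := by rw [← key, sq]
      _ ≤ (∑ a, (v a) ^ 2) * (∑ a, (u a) ^ 2) := cs
    exact le_of_mul_le_mul_right this h0

lemma tnorm_modeProd_le {d : ℕ} {I : Fin d → ℕ} (X : Tensor d I) (n : Fin d) {rk : ℕ}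
    (A : Matrix (Fin (I n)) (Fin rk) ℝ) (hA : Aᵀ * A = 1) :
    tnorm (modeProd X n (A * Aᵀ)) ≤ tnorm X := by
  apply Real.sqrt_le_sqrt
  set P : Matrix (Fin (I n)) (Fin (I n)) ℝ := A * Aᵀ with hP
  set e := Equiv.piSplitAt n (fun i => Fin (I i)) with he
  have hsum : ∀ f : (∀ i : Fin d, Fin (I i)) → ℝ,
      ∑ idx, f idx = ∑ c, ∑ a, f (e.symm (a, c)) := by
    intro f
    rw [← Equiv.sum_comp e.symm f, Fintype.sum_prod_type, Finset.sum_comm]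
  rw [hsum, hsum fun idx => (X idx) ^ 2]
  apply Finset.sum_le_sum
  intro c _
  have happ : ∀ a, modeProd X n P (e.symm (a, c)) =
      (P *ᵥ fun b => X (e.symm (b, c))) a := by
    intro a
    have hn : ∀ t, (e.symm (⟨t, c⟩ : _ × _)) n = t := by
      intro t; simp [he, Equiv.piSplitAt]
    have hupd : ∀ t, Function.update (e.symm (a, c)) n t = e.symm (t, c) := by
      intro t
      funext j
      by_cases h : j = n
      · subst h; rw [Function.update_self, hn]
      · rw [Function.update_of_ne h]
        simp [he, Equiv.piSplitAt, h]
    simp only [modeProd, Matrix.mulVec, dotProduct, hn, hupd]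
  simp only [happ]
  exact mulVec_proj_sq_le A hA _



lemma telescope {d : ℕ} {I : Fin d → ℕ}
    (M : ∀ k : Fin d, Matrix (Fin (I k)) (Fin (I k)) ℝ)
    (hM : ∀ (k : Fin d) (X : Tensor d I), tnorm (modeProd X k (M k)) ≤ tnorm X) :
    ∀ l : List (Fin d), l.Nodup → ∀ Y : Tensor d I,
      tnorm (Y - multiProd Y M l) ≤ (l.map fun k => tnorm (Y - modeProd Y k (M k))).sum := by
  intro l
  induction l with
  | nil => intro _ Y; simp [multiProd, tnorm]
  | cons k l ih =>
    intro hnd Y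
    obtain ⟨hk, hl⟩ := List.nodup_cons.mp hnd
    set Y' := modeProd Y k (M k) with hY'
    have h1 : Y - multiProd Y M (k :: l) = (Y - Y') + (Y' - multiProd Y' M l) := by
      have : multiProd Y M (k :: l) = multiProd Y' M l := rfl
      rw [this]; abel
    rw [List.map_cons, List.sum_cons, h1]
    refine le_trans (tnorm_add_le _ _) (add_le_add_right ?_ _)
    refine le_trans (ih hl Y') ?_
    apply List.sum_le_sum
    intro j hj
    have hjk : k ≠ j := fun h => hk (h ▸ hj)
    have heq : Y' - modeProd Y' j (M j) = modeProd (Y - modeProd Y j (M j)) k (M k) := by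
      rw [modeProd_sub]
      congr 1
      exact modeProd_comm Y hjk (M k) (M j)
    rw [heq]
    exact hM k _


/-- for orthogonal projections `P k = A k * (A k)ᵀ` along each mode,
`‖Y − Y ×₁ P₁ ⋯ ×_d P_d‖ ≤ Σ_k ‖Y − Y ×_k P_k‖`. -/
theorem statement4 {d : ℕ} {I : Fin d → ℕ} (Y : Tensor d I) (r : Fin d → ℕ)
    (A : ∀ k : Fin d, Matrix (Fin (I k)) (Fin (r k)) ℝ)
    (hA : ∀ k, (A k)ᵀ * A k = 1) :
    tnorm (Y - multiProd Y (fun k => A k * (A k)ᵀ) (List.finRange d)) ≤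
      ∑ k : Fin d, tnorm (Y - modeProd Y k (A k * (A k)ᵀ)) := by
  rw [Fin.sum_univ_def]
  exact telescope _ (fun k X => tnorm_modeProd_le X k (A k) (hA k))
    (List.finRange d) (List.nodup_finRange d) Y

end
end
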